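/- For each pair of integers n, k ≥ 1 let S_{n,k} : [0,1) → ℝ be a differentiable non-decreasing function with S_{n,k}(0) ≥ 0. Then the set of r ∈ (0,1) for which S_{n,k}′(r) > (S_{n,k}(r) + 2e)·(log(S_{n,k}(r) + 2e))^{n²+k²+1}·(1−r²)^{−1} holds for some pair (n,k) has finite hyperbolic measure. -/

import Mathlib

open MeasureTheory Real Set

open Filter Topology

lemma aux_log_gt_one : 1 < Real.log (2 * Real.exp 1) := by
  rw [Real.log_mul two_ne_zero (Real.exp_ne_zero 1), Real.log_exp]
  have := Real.log_pos (by norm_num : (1:ℝ) < 2)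
  linarith

lemma aux_deriv_nonneg {f : ℝ → ℝ} {d r : ℝ} (hd : HasDerivAt f d r)
    (hr : r ∈ Ioo (0:ℝ) 1) (hm : MonotoneOn f (Ico (0:ℝ) 1)) : 0 ≤ d := by
  have H : Tendsto (slope f r) (𝓝[>] r) (𝓝 d) :=
    (hasDerivAt_iff_tendsto_slope.1 hd).mono_left
      (nhdsWithin_mono _ (fun y hy => ne_of_gt hy))
  refine ge_of_tendsto H ?_
  filter_upwards [Ioo_mem_nhdsGT_of_mem ⟨le_refl r, hr.2⟩] with y hy
  rw [slope_def_field]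
  exact div_nonneg (sub_nonneg.2 (hm ⟨hr.1.le, hr.2⟩
    ⟨(hr.1.trans hy.1).le, hy.2⟩ hy.1.le)) (sub_nonneg.2 hy.1.le)

lemma aux_F_hasDeriv (m : ℕ) (hm : 2 ≤ m) (t : ℝ) (ht : 0 ≤ t) :
    HasDerivAt (fun x : ℝ => -(((m:ℝ) * Real.log (x + 2 * Real.exp 1) ^ m)⁻¹))
      (((t + 2 * Real.exp 1) * Real.log (t + 2 * Real.exp 1) ^ (m + 1))⁻¹) t := by
  obtain ⟨j, rfl⟩ : ∃ j, m = j + 2 := ⟨m - 2, by omega⟩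
  set c : ℝ := 2 * Real.exp 1 with hc
  have hcpos : 0 < c := by positivity
  have hpos : 0 < t + c := by linarith
  have hu : 1 < Real.log (t + c) := by
    calc 1 < Real.log c := aux_log_gt_one
    _ ≤ Real.log (t + c) := Real.log_le_log hcpos (by linarith)
  set u : ℝ := Real.log (t + c) with hud
  have h1 : HasDerivAt (fun x : ℝ => x + c) 1 t := (hasDerivAt_id t).add_const c
  have h2 : HasDerivAt (fun x : ℝ => Real.log (x + c)) ((t + c)⁻¹ * 1) t :=
    by have := (Real.hasDerivAt_log (ne_of_gt hpos)).comp t h1; exact this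
  have h3 := h2.pow (j + 2)
  have h4 := (h3.const_mul ((j + 2 : ℕ) : ℝ)).inv (by simp only [Pi.pow_apply]; exact mul_ne_zero (by positivity) (pow_ne_zero _ (ne_of_gt (lt_trans one_pos hu))))
  have h5 := h4.neg
  refine h5.congr_deriv ?_
  simp only [Pi.pow_apply]
  have hu0 : u ≠ 0 := by positivity
  have ht0 : t + c ≠ 0 := ne_of_gt hpos
  rw [← hud]
  have hj : j + 2 - 1 = j + 1 := rfl
  rw [hj]
  have hj2 : ((j + 2 : ℕ) : ℝ) ≠ 0 := by positivity
  field_simp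
  ring

lemma aux_key (f : ℝ → ℝ) (m : ℕ) (hm : 2 ≤ m)
    (hdiff : ∀ r ∈ Ico (0:ℝ) 1, DifferentiableAt ℝ f r)
    (hmono : MonotoneOn f (Ico (0:ℝ) 1)) (h0 : 0 ≤ f 0) :
    (volume.withDensity fun r : ℝ => ENNReal.ofReal ((1 - r ^ 2)⁻¹))
      {r : ℝ | r ∈ Ioo (0:ℝ) 1 ∧
        (f r + 2 * Real.exp 1) * Real.log (f r + 2 * Real.exp 1) ^ (m + 1) *
          (1 - r ^ 2)⁻¹ < deriv f r}
      ≤ ENNReal.ofReal (((m:ℝ) * Real.log (2 * Real.exp 1) ^ m)⁻¹) := by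
  set c : ℝ := 2 * Real.exp 1 with hc
  have hcpos : 0 < c := by positivity
  have hLc : 1 < Real.log c := aux_log_gt_one
  set F : ℝ → ℝ := fun x => -(((m:ℝ) * Real.log (x + c) ^ m)⁻¹) with hF
  set G : ℝ → ℝ := fun r => F (f r) with hG
  -- basic positivity facts
  have hfnn : ∀ r ∈ Ico (0:ℝ) 1, 0 ≤ f r := fun r hr =>
    h0.trans (hmono ⟨le_refl 0, one_pos⟩ hr hr.1)
  have hlog : ∀ t : ℝ, 0 ≤ t → 1 < Real.log (t + c) := by
    intro t ht
    calc 1 < Real.log c := hLc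
    _ ≤ Real.log (t + c) := Real.log_le_log hcpos (by linarith)
  -- derivative of G on Ico 0 1
  have hGderiv : ∀ r ∈ Ico (0:ℝ) 1, HasDerivAt G
      (((f r + c) * Real.log (f r + c) ^ (m + 1))⁻¹ * deriv f r) r := by
    intro r hr
    exact (aux_F_hasDeriv m hm (f r) (hfnn r hr)).comp r (hdiff r hr).hasDerivAt
  have hGd : ∀ r ∈ Ico (0:ℝ) 1,
      deriv G r = ((f r + c) * Real.log (f r + c) ^ (m + 1))⁻¹ * deriv f r :=
    fun r hr => (hGderiv r hr).deriv
  -- F is monotone on nonneg reals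
  have hFmono : ∀ s t : ℝ, 0 ≤ s → s ≤ t → F s ≤ F t := by
    intro s t hs hst
    have h1 : (1:ℝ) < Real.log (s + c) := hlog s hs
    have h2 : Real.log (s + c) ≤ Real.log (t + c) :=
      Real.log_le_log (by linarith) (by linarith)
    have hmpos : (0:ℝ) < (m:ℝ) := by positivity
    have hp1 : (0:ℝ) < (m:ℝ) * Real.log (s + c) ^ m := by positivity
    have hle : (m:ℝ) * Real.log (s + c) ^ m ≤ (m:ℝ) * Real.log (t + c) ^ m := by
      gcongr
    simp only [hF, neg_le_neg_iff]
    exact inv_anti₀ hp1 hle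
  have hGmono : MonotoneOn G (Ico (0:ℝ) 1) := fun a ha b hb hab =>
    hFmono (f a) (f b) (hfnn a ha) (hmono ha hb hab)
  -- G is bounded: F 0 ≤ G r ≤ 0 on Ico 0 1
  have hGle : ∀ r ∈ Ico (0:ℝ) 1, G r ≤ 0 := by
    intro r hr
    have h1 : (1:ℝ) < Real.log (f r + c) := hlog _ (hfnn r hr)
    have : (0:ℝ) < (((m:ℝ) * Real.log (f r + c) ^ m)⁻¹) := by positivity
    simp only [hG, hF]
    linarith
  have hGge : ∀ r ∈ Ico (0:ℝ) 1, F 0 ≤ G r :=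
    fun r hr => hFmono 0 (f r) le_rfl (hfnn r hr)
  have hF0 : F 0 = -(((m:ℝ) * Real.log c ^ m)⁻¹) := by simp only [hF, zero_add]
  -- the exceptional set, rewritten via deriv G
  set E : Set ℝ := {r : ℝ | r ∈ Ioo (0:ℝ) 1 ∧
      (f r + c) * Real.log (f r + c) ^ (m + 1) * (1 - r ^ 2)⁻¹ < deriv f r} with hE
  have hEeq : E = Ioo (0:ℝ) 1 ∩ {r | (1 - r ^ 2)⁻¹ < deriv G r} := by
    ext r
    simp only [hE, mem_setOf_eq, mem_inter_iff]
    constructor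
    · rintro ⟨hr, h⟩
      refine ⟨hr, ?_⟩
      have h1 : (1:ℝ) < Real.log (f r + c) := hlog _ (hfnn r ⟨hr.1.le, hr.2⟩)
      have h2 : (0:ℝ) ≤ f r := hfnn r ⟨hr.1.le, hr.2⟩
      rw [hGd r ⟨hr.1.le, hr.2⟩, inv_mul_eq_div, lt_div_iff₀']
      · exact h
      · exact mul_pos (by linarith) (pow_pos (by linarith) _)
    · rintro ⟨hr, h⟩
      refine ⟨hr, ?_⟩
      have h1 : (1:ℝ) < Real.log (f r + c) := hlog _ (hfnn r ⟨hr.1.le, hr.2⟩)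
      have h2 : (0:ℝ) ≤ f r := hfnn r ⟨hr.1.le, hr.2⟩
      rw [hGd r ⟨hr.1.le, hr.2⟩, inv_mul_eq_div, lt_div_iff₀'] at h
      · exact h
      · exact mul_pos (by linarith) (pow_pos (by linarith) _)
  have hEmeas : MeasurableSet E := by
    rw [hEeq]
    exact measurableSet_Ioo.inter
      (measurableSet_lt ((continuous_const.sub (continuous_pow 2)).measurable.inv)
        (measurable_deriv G))
  -- main estimate
  set B : ℝ := (((m:ℝ) * Real.log c ^ m)⁻¹) with hB
  have key : ∀ i : ℕ,
      ∫⁻ x in Ioo (0:ℝ) (1 - 1/(i+2)), ENNReal.ofReal (deriv G x) ≤ ENNReal.ofReal B := by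
    intro i
    set b : ℝ := 1 - 1/(i+2) with hb
    have hi2 : (0:ℝ) < (i:ℝ) + 2 := by positivity
    have hb0 : (0:ℝ) < b := by
      have : (1:ℝ)/(i+2) ≤ 1/2 := by
        apply one_div_le_one_div_of_le <;> [norm_num; linarith [Nat.cast_nonneg (α := ℝ) i]]
      simp only [hb]; linarith
    have hb1 : b < 1 := by
      have : (0:ℝ) < 1/(i+2) := by positivity
      simp only [hb]; linarith
    have hder : ∀ x ∈ Ioo (0:ℝ) b, HasDerivAt G (deriv G x) x := by
      intro x hx
      have hx' : x ∈ Ico (0:ℝ) 1 := ⟨hx.1.le, hx.2.trans hb1⟩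
      rw [hGd x hx']
      exact hGderiv x hx'
    have hcont : ContinuousOn G (Icc 0 b) := fun x hx =>
      ((hGderiv x ⟨hx.1, lt_of_le_of_lt hx.2 hb1⟩).continuousAt).continuousWithinAt
    have hpos : ∀ x ∈ Ioo (0:ℝ) b, 0 ≤ deriv G x := fun x hx =>
      aux_deriv_nonneg (hder x hx) ⟨hx.1, hx.2.trans hb1⟩ hGmono
    have hint : IntegrableOn (deriv G) (Ioc 0 b) :=
      intervalIntegral.integrableOn_deriv_of_nonneg hcont hder hpos
    have hint' : IntegrableOn (deriv G) (Ioo 0 b) := hint.mono_set Ioo_subset_Ioc_self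
    have heq : ∫ x in Ioo (0:ℝ) b, deriv G x = G b - G 0 := by
      rw [← integral_Ioc_eq_integral_Ioo, ← intervalIntegral.integral_of_le hb0.le]
      exact intervalIntegral.integral_eq_sub_of_hasDerivAt_of_le hb0.le hcont hder
        ((intervalIntegrable_iff_integrableOn_Ioc_of_le hb0.le).2 hint)
    have hnn : 0 ≤ᵐ[volume.restrict (Ioo (0:ℝ) b)] deriv G :=
      (ae_restrict_mem measurableSet_Ioo).mono hpos
    calc ∫⁻ x in Ioo (0:ℝ) b, ENNReal.ofReal (deriv G x)
        = ENNReal.ofReal (∫ x in Ioo (0:ℝ) b, deriv G x) :=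
          (ofReal_integral_eq_lintegral_ofReal hint' hnn).symm
      _ = ENNReal.ofReal (G b - G 0) := by rw [heq]
      _ ≤ ENNReal.ofReal B := by
          apply ENNReal.ofReal_le_ofReal
          have h1 := hGle b ⟨hb0.le, hb1⟩
          have h2 := hGge 0 ⟨le_rfl, one_pos⟩
          rw [hF0] at h2
          linarith
  -- pass to the union
  have hunion : Ioo (0:ℝ) 1 = ⋃ i : ℕ, Ioo (0:ℝ) (1 - 1/(i+2)) := by
    ext x
    simp only [mem_iUnion, mem_Ioo]
    constructor
    · rintro ⟨hx0, hx1⟩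
      obtain ⟨n, hn⟩ := exists_nat_one_div_lt (sub_pos.2 hx1)
      refine ⟨n, hx0, ?_⟩
      have h1 : (1:ℝ)/(n+2) ≤ 1/(n+1) := by
        apply one_div_le_one_div_of_le <;> [positivity; linarith]
      linarith
    · rintro ⟨i, hx0, hx1⟩
      have : (0:ℝ) < 1/(i+2) := by positivity
      exact ⟨hx0, by linarith⟩
  have hIoo : ∫⁻ x in Ioo (0:ℝ) 1, ENNReal.ofReal (deriv G x) ≤ ENNReal.ofReal B := by
    set ν := volume.withDensity (fun r => ENNReal.ofReal (deriv G r)) with hν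
    have happ : ∀ s : Set ℝ, MeasurableSet s →
        ν s = ∫⁻ x in s, ENNReal.ofReal (deriv G x) := fun s hs => withDensity_apply _ hs
    have hmonoset : Monotone (fun i : ℕ => Ioo (0:ℝ) (1 - 1/(i+2))) := by
      intro i j hij
      apply Ioo_subset_Ioo le_rfl
      have hcij : (i:ℝ) ≤ (j:ℝ) := Nat.cast_le.2 hij
      have h1 : (1:ℝ)/(j+2) ≤ 1/(i+2) := by
        apply one_div_le_one_div_of_le <;> [positivity; linarith]
      linarith
    rw [← happ _ measurableSet_Ioo, hunion,
      Directed.measure_iUnion (hmonoset.directed_le)]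
    apply iSup_le
    intro i
    rw [happ _ measurableSet_Ioo]
    exact key i
  calc (volume.withDensity fun r : ℝ => ENNReal.ofReal ((1 - r ^ 2)⁻¹)) E
      = ∫⁻ r in E, ENNReal.ofReal ((1 - r ^ 2)⁻¹) := withDensity_apply _ hEmeas
    _ ≤ ∫⁻ r in E, ENNReal.ofReal (deriv G r) := by
        apply setLIntegral_mono ((measurable_deriv G).ennreal_ofReal)
        intro x hx
        rw [hEeq] at hx
        exact ENNReal.ofReal_le_ofReal hx.2.le
    _ ≤ ∫⁻ r in Ioo (0:ℝ) 1, ENNReal.ofReal (deriv G r) := by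
        apply lintegral_mono_set
        rw [hEeq]; exact inter_subset_left
    _ ≤ ENNReal.ofReal B := hIoo


/-- Paper's Claim 2: the doubly indexed Borel–Nevanlinna growth lemma.  The set of radii
where some `S n k` grows faster than `(S+2e)·(log(S+2e))^{n²+k²+1}/(1-r²)` has finite
hyperbolic measure. -/
theorem stmt_1 (S : ℕ → ℕ → ℝ → ℝ)
    (hdiff : ∀ n k : ℕ, 1 ≤ n → 1 ≤ k → ∀ r ∈ Ico (0:ℝ) 1, DifferentiableAt ℝ (S n k) r)
    (hmono : ∀ n k : ℕ, 1 ≤ n → 1 ≤ k → MonotoneOn (S n k) (Ico (0:ℝ) 1))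
    (h0 : ∀ n k : ℕ, 1 ≤ n → 1 ≤ k → 0 ≤ S n k 0) :
    (volume.withDensity fun r : ℝ => ENNReal.ofReal ((1 - r ^ 2)⁻¹))
        {r : ℝ | r ∈ Ioo (0:ℝ) 1 ∧
          ∃ n k : ℕ, 1 ≤ n ∧ 1 ≤ k ∧
            (S n k r + 2 * Real.exp 1) *
                (Real.log (S n k r + 2 * Real.exp 1)) ^ (n ^ 2 + k ^ 2 + 1) *
                (1 - r ^ 2)⁻¹ <
              deriv (S n k) r}
      < ⊤ := by
  set μ := volume.withDensity fun r : ℝ => ENNReal.ofReal ((1 - r ^ 2)⁻¹) with hμ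
  set L : ℝ := Real.log (2 * Real.exp 1) with hLdef
  have hL : 1 < L := aux_log_gt_one
  set q : ENNReal := ENNReal.ofReal L⁻¹ with hq
  have hq1 : q < 1 := by
    rw [hq, ENNReal.ofReal_lt_one]
    exact inv_lt_one_of_one_lt₀ hL
  set T : ℕ × ℕ → Set ℝ := fun p =>
    if 1 ≤ p.1 ∧ 1 ≤ p.2 then
      {r : ℝ | r ∈ Ioo (0:ℝ) 1 ∧
        (S p.1 p.2 r + 2 * Real.exp 1) *
          Real.log (S p.1 p.2 r + 2 * Real.exp 1) ^ (p.1 ^ 2 + p.2 ^ 2 + 1) *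
          (1 - r ^ 2)⁻¹ < deriv (S p.1 p.2) r}
    else ∅ with hT
  have hsub : {r : ℝ | r ∈ Ioo (0:ℝ) 1 ∧
          ∃ n k : ℕ, 1 ≤ n ∧ 1 ≤ k ∧
            (S n k r + 2 * Real.exp 1) *
                (Real.log (S n k r + 2 * Real.exp 1)) ^ (n ^ 2 + k ^ 2 + 1) *
                (1 - r ^ 2)⁻¹ <
              deriv (S n k) r} ⊆ ⋃ p : ℕ × ℕ, T p := by
    rintro r ⟨hr, n, k, hn, hk, h⟩
    refine mem_iUnion.2 ⟨(n, k), ?_⟩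
    rw [hT]
    simp only [if_pos (⟨hn, hk⟩ : 1 ≤ (n,k).1 ∧ 1 ≤ (n,k).2)]
    exact ⟨hr, h⟩
  have hTbound : ∀ p : ℕ × ℕ, μ (T p) ≤ q ^ p.1 * q ^ p.2 := by
    rintro ⟨n, k⟩
    by_cases hp : 1 ≤ n ∧ 1 ≤ k
    · obtain ⟨hn, hk⟩ := hp
      set m : ℕ := n ^ 2 + k ^ 2 with hmdef
      have hm : 2 ≤ m := by
        have h1 : 1 ≤ n ^ 2 := Nat.one_le_pow 2 n hn
        have h2 : 1 ≤ k ^ 2 := Nat.one_le_pow 2 k hk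
        omega
      have hTp : T (n, k) = {r : ℝ | r ∈ Ioo (0:ℝ) 1 ∧
          (S n k r + 2 * Real.exp 1) *
            Real.log (S n k r + 2 * Real.exp 1) ^ (m + 1) *
            (1 - r ^ 2)⁻¹ < deriv (S n k) r} := by
        rw [hT]
        simp only [if_pos (⟨hn, hk⟩ : 1 ≤ (n,k).1 ∧ 1 ≤ (n,k).2)]
        rfl
      have hkey := aux_key (S n k) m hm (hdiff n k hn hk) (hmono n k hn hk) (h0 n k hn hk)
      rw [hTp]
      refine le_trans hkey ?_
      have hnk : n + k ≤ m := by
        have h1 : n ≤ n ^ 2 := Nat.le_self_pow two_ne_zero n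
        have h2 : k ≤ k ^ 2 := Nat.le_self_pow two_ne_zero k
        omega
      have hreal : ((m:ℝ) * L ^ m)⁻¹ ≤ L⁻¹ ^ n * L⁻¹ ^ k := by
        rw [← pow_add, inv_pow]
        apply inv_anti₀ (by positivity)
        calc L ^ (n + k) ≤ L ^ m := pow_le_pow_right₀ hL.le hnk
          _ ≤ (m:ℝ) * L ^ m := by
              have : (1:ℝ) ≤ (m:ℝ) := by exact_mod_cast hm.trans' one_le_two
              nlinarith [pow_pos (lt_trans one_pos hL) m]
      calc ENNReal.ofReal (((m:ℝ) * L ^ m)⁻¹) ≤ ENNReal.ofReal (L⁻¹ ^ n * L⁻¹ ^ k) :=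
            ENNReal.ofReal_le_ofReal hreal
        _ = q ^ n * q ^ k := by
            rw [ENNReal.ofReal_mul (by positivity), hq,
              ENNReal.ofReal_pow (by positivity), ENNReal.ofReal_pow (by positivity)]
    · have : T (n, k) = ∅ := by rw [hT]; exact if_neg hp
      simp [this]
  have htsum : ∑' p : ℕ × ℕ, (q ^ p.1 * q ^ p.2) < ⊤ := by
    have hgeo : ∑' n : ℕ, q ^ n = (1 - q)⁻¹ := ENNReal.tsum_geometric q
    have hfin : (1 - q)⁻¹ < ⊤ := ENNReal.inv_lt_top.2 (tsub_pos_of_lt hq1)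
    calc ∑' p : ℕ × ℕ, (q ^ p.1 * q ^ p.2)
        = ∑' n : ℕ, ∑' k : ℕ, (q ^ n * q ^ k) := ENNReal.tsum_prod'
      _ = ∑' n : ℕ, (q ^ n * ∑' k : ℕ, q ^ k) := by
          congr 1; funext n; exact ENNReal.tsum_mul_left
      _ = (∑' n : ℕ, q ^ n) * ∑' k : ℕ, q ^ k := by rw [ENNReal.tsum_mul_right]
      _ < ⊤ := by
          rw [hgeo]
          exact ENNReal.mul_lt_top hfin hfin
  calc μ _ ≤ μ (⋃ p : ℕ × ℕ, T p) := measure_mono hsub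
    _ ≤ ∑' p : ℕ × ℕ, μ (T p) := measure_iUnion_le T
    _ ≤ ∑' p : ℕ × ℕ, (q ^ p.1 * q ^ p.2) := ENNReal.tsum_le_tsum hTbound
    _ < ⊤ := htsum
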